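/- Let M be an n×n integer matrix that is invertible over the integers (i.e., det M = ±1). If every complex eigenvalue of M has absolute value equal to 1, then every eigenvalue of M is a root of unity. -/

import Mathlib

/-- Kronecker's theorem: if an integer matrix is invertible over ℤ and all its
complex eigenvalues have absolute value 1, then all its eigenvalues are roots of unity. -/
theorem kronecker_roots_of_unity (n : ℕ) (M : Matrix (Fin n) (Fin n) ℤ)
    (hM : IsUnit M.det)
    (habs : ∀ z : ℂ, (M.map (Int.cast : ℤ → ℂ)).charpoly.IsRoot z → ‖z‖ = 1) :
    ∀ z : ℂ, (M.map (Int.cast : ℤ → ℂ)).charpoly.IsRoot z → ∃ k : ℕ, 0 < k ∧ z ^ k = 1 := by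
  intro z hz
  -- z is a root of the integer charpoly mapped to ℂ
  have hcp : (M.map (Int.cast : ℤ → ℂ)).charpoly = M.charpoly.map (Int.castRingHom ℂ) :=
    Matrix.charpoly_map M (Int.castRingHom ℂ)
  have hzint : IsIntegral ℤ z := by
    refine ⟨M.charpoly, M.charpoly_monic, ?_⟩
    have := hz
    rw [hcp] at this
    simpa [Polynomial.IsRoot, Polynomial.eval_map, Polynomial.aeval_def] using this
  have hzQ : IsIntegral ℚ z := hzint.tower_top
  -- the number field K = ℚ⟮z⟯
  let K := IntermediateField.adjoin ℚ ({z} : Set ℂ)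
  haveI : FiniteDimensional ℚ K := IntermediateField.adjoin.finiteDimensional hzQ
  haveI : NumberField K := ⟨⟩
  let x : K := ⟨z, IntermediateField.subset_adjoin ℚ _ rfl⟩
  have hxz : (algebraMap K ℂ) x = z := rfl
  have hxi : IsIntegral ℤ x := by
    rwa [← isIntegral_algebraMap_iff (algebraMap K ℂ).injective, hxz]
  have key : ∀ φ : K →+* ℂ, ‖φ x‖ = 1 := by
    intro φ
    -- φ x is a root of minpoly ℚ x = minpoly ℚ z, which divides the ℚ-charpoly
    have hmin : minpoly ℚ x = minpoly ℚ z := by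
      rw [← minpoly.algebraMap_eq (algebraMap K ℂ).injective, hxz]
    have hdvd : minpoly ℚ z ∣ M.charpoly.map (Int.castRingHom ℚ) := by
      apply minpoly.dvd
      have := hz
      rw [hcp] at this
      simpa [Polynomial.IsRoot, Polynomial.eval_map, Polynomial.aeval_def,
        Polynomial.eval₂_map,
        RingHom.ext_int ((algebraMap ℚ ℂ).comp (Int.castRingHom ℚ)) (Int.castRingHom ℂ)] using this
    have h1 : Polynomial.aeval (φ x) (minpoly ℚ x) = 0 := by
      have h0 := Polynomial.aeval_algHom_apply φ.toRatAlgHom x (minpoly ℚ x)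
      rw [minpoly.aeval, map_zero] at h0
      exact h0
    have h2 : Polynomial.aeval (φ x) (M.charpoly.map (Int.castRingHom ℚ)) = 0 := by
      rw [hmin] at h1
      obtain ⟨q, hq⟩ := hdvd
      rw [hq, map_mul, h1, zero_mul]
    have h3 : (M.map (Int.cast : ℤ → ℂ)).charpoly.IsRoot (φ x) := by
      rw [hcp]
      simpa [Polynomial.IsRoot, Polynomial.eval_map, Polynomial.aeval_def,
        Polynomial.eval₂_map,
        RingHom.ext_int ((algebraMap ℚ ℂ).comp (Int.castRingHom ℚ)) (Int.castRingHom ℂ)] using h2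
    exact habs _ h3
  obtain ⟨k, hk, hxk⟩ := NumberField.Embeddings.pow_eq_one_of_norm_eq_one K ℂ hxi key
  refine ⟨k, hk, ?_⟩
  have := congrArg (algebraMap K ℂ) hxk
  simpa [hxz] using this
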